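/- The set of solutions (p2, p3, p4, p5, p6, p15, p20, p30, p10, p12, p41, p43, p45, p119) ∈ ℚ^14 with all coordinates nonzero of the system p41 = p10^3·p12, p43 = p10^2·p12^2, p45 = p10·p12^3, p119 = p41·p43·p10^2·p12^3, p119 = p10^12, p119 = p12^10, p119 = p2^60, p119 = p3^40, p119 = p4^30, p119 = p5^20, p119 = p6^20, p119 = p15^8, p119 = p20^6, p119 = p30^4 forms, under componentwise multiplication, a group of order exactly 512 in which every element squares to the identity; hence it is isomorphic to (ℤ/2ℤ)^9. -/

import Mathlib

section StmtAux12

private def sgn (a : ZMod 2) : ℚˣ := if a = 0 then 1 else -1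

private lemma sgn_zero : sgn 0 = 1 := rfl

private lemma sgn_add (a b : ZMod 2) : sgn (a + b) = sgn a * sgn b := by
  fin_cases a <;> fin_cases b <;> norm_num [sgn] <;> decide

private lemma sgn_sq (a : ZMod 2) : sgn a ^ 2 = 1 := by
  fin_cases a <;> norm_num [sgn]

private lemma sgn_pow_even (a : ZMod 2) {n : ℕ} (h : n % 2 = 0) : sgn a ^ n = 1 := by
  obtain ⟨k, rfl⟩ : ∃ k, n = 2 * k := ⟨n / 2, by omega⟩
  rw [pow_mul, sgn_sq, one_pow]

private lemma sgn_pow_odd (a : ZMod 2) {n : ℕ} (h : n % 2 = 1) : sgn a ^ n = sgn a := by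
  obtain ⟨k, rfl⟩ : ∃ k, n = 2 * k + 1 := ⟨n / 2, by omega⟩
  rw [pow_succ, pow_mul, sgn_sq, one_pow, one_mul]

private lemma sgn_inj : Function.Injective sgn := by
  intro a b h
  revert a b; decide

private def gvec (f : Fin 9 → ZMod 2) : Fin 14 → ℚˣ := fun i =>
  if h : (i : ℕ) < 8 then sgn (f ⟨i, by omega⟩)
  else if (i : ℕ) = 9 ∨ (i : ℕ) = 10 ∨ (i : ℕ) = 12 then sgn (f 8) else 1

private lemma gv0 (f : Fin 9 → ZMod 2) : gvec f 0 = sgn (f 0) := by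
  simp [gvec, show ((0:Fin 14):ℕ) = 0 from rfl]
private lemma gv1 (f : Fin 9 → ZMod 2) : gvec f 1 = sgn (f 1) := by
  simp [gvec, show ((1:Fin 14):ℕ) = 1 from rfl]
private lemma gv2 (f : Fin 9 → ZMod 2) : gvec f 2 = sgn (f 2) := by
  simp [gvec, show ((2:Fin 14):ℕ) = 2 from rfl]
private lemma gv3 (f : Fin 9 → ZMod 2) : gvec f 3 = sgn (f 3) := by
  simp [gvec, show ((3:Fin 14):ℕ) = 3 from rfl]
private lemma gv4 (f : Fin 9 → ZMod 2) : gvec f 4 = sgn (f 4) := by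
  simp [gvec, show ((4:Fin 14):ℕ) = 4 from rfl]
private lemma gv5 (f : Fin 9 → ZMod 2) : gvec f 5 = sgn (f 5) := by
  simp [gvec, show ((5:Fin 14):ℕ) = 5 from rfl]
private lemma gv6 (f : Fin 9 → ZMod 2) : gvec f 6 = sgn (f 6) := by
  simp [gvec, show ((6:Fin 14):ℕ) = 6 from rfl]
private lemma gv7 (f : Fin 9 → ZMod 2) : gvec f 7 = sgn (f 7) := by
  simp [gvec, show ((7:Fin 14):ℕ) = 7 from rfl]
private lemma gv8 (f : Fin 9 → ZMod 2) : gvec f 8 = 1 := by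
  simp [gvec, show ((8:Fin 14):ℕ) = 8 from rfl]
private lemma gv9 (f : Fin 9 → ZMod 2) : gvec f 9 = sgn (f 8) := by
  simp [gvec, show ((9:Fin 14):ℕ) = 9 from rfl]
private lemma gv10 (f : Fin 9 → ZMod 2) : gvec f 10 = sgn (f 8) := by
  simp [gvec, show ((10:Fin 14):ℕ) = 10 from rfl]
private lemma gv11 (f : Fin 9 → ZMod 2) : gvec f 11 = 1 := by
  simp [gvec, show ((11:Fin 14):ℕ) = 11 from rfl]
private lemma gv12 (f : Fin 9 → ZMod 2) : gvec f 12 = sgn (f 8) := by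
  simp [gvec, show ((12:Fin 14):ℕ) = 12 from rfl]
private lemma gv13 (f : Fin 9 → ZMod 2) : gvec f 13 = 1 := by
  simp [gvec, show ((13:Fin 14):ℕ) = 13 from rfl]

private lemma gvec_add (f g : Fin 9 → ZMod 2) (i : Fin 14) :
    gvec (f + g) i = gvec f i * gvec g i := by
  unfold gvec
  by_cases h : (i : ℕ) < 8
  · rw [dif_pos h, dif_pos h, dif_pos h, Pi.add_apply, sgn_add]
  · by_cases h2 : (i : ℕ) = 9 ∨ (i : ℕ) = 10 ∨ (i : ℕ) = 12
    · rw [dif_neg h, dif_neg h, dif_neg h, if_pos h2, if_pos h2, if_pos h2,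
        Pi.add_apply, sgn_add]
    · rw [dif_neg h, dif_neg h, dif_neg h, if_neg h2, if_neg h2, if_neg h2, mul_one]

private lemma gvec_zero (i : Fin 14) : gvec 0 i = 1 := by
  unfold gvec
  by_cases h : (i : ℕ) < 8
  · rw [dif_pos h]; exact sgn_zero
  · by_cases h2 : (i : ℕ) = 9 ∨ (i : ℕ) = 10 ∨ (i : ℕ) = 12
    · rw [dif_neg h, if_pos h2]; exact sgn_zero
    · rw [dif_neg h, if_neg h2]

private def phi : Multiplicative (Fin 9 → ZMod 2) →* (Fin 14 → ℚˣ) where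
  toFun f := gvec f.toAdd
  map_one' := funext fun i => gvec_zero i
  map_mul' f g := funext fun i => gvec_add f.toAdd g.toAdd i

private lemma phi_apply (f : Multiplicative (Fin 9 → ZMod 2)) :
    phi f = gvec f.toAdd := rfl

private lemma units_root {x : ℚˣ} {n : ℕ} (hn : n ≠ 0) (h : x ^ n = 1) :
    x = 1 ∨ x = -1 := by
  have hx : (x : ℚ) ^ n = 1 := by rw [← Units.val_pow_eq_pow_val, h, Units.val_one]
  rcases (pow_eq_one_iff_of_ne_zero hn).mp hx with h1 | ⟨h1, _⟩
  · left; exact Units.ext h1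
  · right; exact Units.ext (by rw [h1]; rfl)

private def eps (x : ℚˣ) : ZMod 2 := if x = 1 then 0 else 1

private lemma sgn_eps {x : ℚˣ} (h : x = 1 ∨ x = -1) : sgn (eps x) = x := by
  rcases h with rfl | rfl
  · simp [eps, sgn]
  · rw [eps, if_neg (by decide : ¬ (-1 : ℚˣ) = 1), sgn,
      if_neg (by decide : ¬ (1 : ZMod 2) = 0)]

private lemma gvec_eq_of (p : Fin 14 → ℚˣ) (v : Fin 9 → ZMod 2)
    (h0 : sgn (v 0) = p 0) (h1 : sgn (v 1) = p 1) (h2 : sgn (v 2) = p 2)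
    (h3 : sgn (v 3) = p 3) (h4 : sgn (v 4) = p 4) (h5 : sgn (v 5) = p 5)
    (h6 : sgn (v 6) = p 6) (h7 : sgn (v 7) = p 7) (h8 : sgn (v 8) = p 9)
    (e8 : p 8 = 1) (e10 : p 10 = p 9) (e11 : p 11 = 1) (e12 : p 12 = p 9)
    (e13 : p 13 = 1) : gvec v = p := by
  funext i
  fin_cases i
  · show gvec v 0 = p 0
    rw [gv0]; exact h0
  · show gvec v 1 = p 1
    rw [gv1]; exact h1
  · show gvec v 2 = p 2
    rw [gv2]; exact h2
  · show gvec v 3 = p 3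
    rw [gv3]; exact h3
  · show gvec v 4 = p 4
    rw [gv4]; exact h4
  · show gvec v 5 = p 5
    rw [gv5]; exact h5
  · show gvec v 6 = p 6
    rw [gv6]; exact h6
  · show gvec v 7 = p 7
    rw [gv7]; exact h7
  · show gvec v 8 = p 8
    rw [gv8]; exact e8.symm
  · show gvec v 9 = p 9
    rw [gv9]; exact h8
  · show gvec v 10 = p 10
    rw [gv10, e10]; exact h8
  · show gvec v 11 = p 11
    rw [gv11]; exact e11.symm
  · show gvec v 12 = p 12
    rw [gv12, e12]; exact h8
  · show gvec v 13 = p 13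
    rw [gv13]; exact e13.symm

private lemma phi_inj : Function.Injective phi := by
  intro f g hfg
  have c : ∀ i : Fin 14, gvec f.toAdd i = gvec g.toAdd i := by
    intro i
    rw [← phi_apply, ← phi_apply, hfg]
  apply Multiplicative.toAdd.injective
  funext j
  fin_cases j
  · show Multiplicative.toAdd f 0 = Multiplicative.toAdd g 0
    exact sgn_inj (by rw [← gv0 f.toAdd, ← gv0 g.toAdd]; exact c 0)
  · show Multiplicative.toAdd f 1 = Multiplicative.toAdd g 1
    exact sgn_inj (by rw [← gv1 f.toAdd, ← gv1 g.toAdd]; exact c 1)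
  · show Multiplicative.toAdd f 2 = Multiplicative.toAdd g 2
    exact sgn_inj (by rw [← gv2 f.toAdd, ← gv2 g.toAdd]; exact c 2)
  · show Multiplicative.toAdd f 3 = Multiplicative.toAdd g 3
    exact sgn_inj (by rw [← gv3 f.toAdd, ← gv3 g.toAdd]; exact c 3)
  · show Multiplicative.toAdd f 4 = Multiplicative.toAdd g 4
    exact sgn_inj (by rw [← gv4 f.toAdd, ← gv4 g.toAdd]; exact c 4)
  · show Multiplicative.toAdd f 5 = Multiplicative.toAdd g 5
    exact sgn_inj (by rw [← gv5 f.toAdd, ← gv5 g.toAdd]; exact c 5)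
  · show Multiplicative.toAdd f 6 = Multiplicative.toAdd g 6
    exact sgn_inj (by rw [← gv6 f.toAdd, ← gv6 g.toAdd]; exact c 6)
  · show Multiplicative.toAdd f 7 = Multiplicative.toAdd g 7
    exact sgn_inj (by rw [← gv7 f.toAdd, ← gv7 g.toAdd]; exact c 7)
  · show Multiplicative.toAdd f 8 = Multiplicative.toAdd g 8
    exact sgn_inj (by rw [← gv9 f.toAdd, ← gv9 g.toAdd]; exact c 9)

private lemma mult_sq (f : Multiplicative (Fin 9 → ZMod 2)) : f * f = 1 := by
  have h : Multiplicative.toAdd f + Multiplicative.toAdd f = 0 := by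
    funext j
    exact CharTwo.add_self_eq_zero _
  calc f * f = Multiplicative.ofAdd (Multiplicative.toAdd f + Multiplicative.toAdd f) := rfl
    _ = Multiplicative.ofAdd 0 := by rw [h]
    _ = 1 := rfl

end StmtAux12

theorem stmt_12 :
    ∃ H : Subgroup (Fin 14 → ℚˣ),
      (H : Set (Fin 14 → ℚˣ)) =
        {p : Fin 14 → ℚˣ | p 10 = p 8 ^ 3 * p 9 ∧
        p 11 = p 8 ^ 2 * p 9 ^ 2 ∧
        p 12 = p 8 * p 9 ^ 3 ∧
        p 13 = p 10 * p 11 * p 8 ^ 2 * p 9 ^ 3 ∧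
        p 13 = p 8 ^ 12 ∧
        p 13 = p 9 ^ 10 ∧
        p 13 = p 0 ^ 60 ∧
        p 13 = p 1 ^ 40 ∧
        p 13 = p 2 ^ 30 ∧
        p 13 = p 3 ^ 20 ∧
        p 13 = p 4 ^ 20 ∧
        p 13 = p 5 ^ 8 ∧
        p 13 = p 6 ^ 6 ∧
        p 13 = p 7 ^ 4} ∧
      Nat.card H = 512 ∧
      (∀ x ∈ H, x * x = 1) ∧
      Nonempty (H ≃* Multiplicative (Fin 9 → ZMod 2)) := by
  classical
  refine ⟨phi.range, ?_, ?_, ?_, ⟨(MonoidHom.ofInjective phi_inj).symm⟩⟩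
  · ext p
    simp only [SetLike.mem_coe, MonoidHom.mem_range, Set.mem_setOf_eq]
    constructor
    · rintro ⟨f, rfl⟩
      rw [phi_apply]
      refine ⟨?_, ?_, ?_, ?_, ?_, ?_, ?_, ?_, ?_, ?_, ?_, ?_, ?_, ?_⟩
      · rw [gv10, gv8, gv9, one_pow, one_mul]
      · rw [gv11, gv8, gv9, one_pow, one_mul, sgn_sq]
      · rw [gv12, gv8, gv9, one_mul]
        exact (sgn_pow_odd _ (by norm_num)).symm
      · rw [gv13, gv10, gv11, gv8, gv9, one_pow, mul_one, mul_one,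
          sgn_pow_odd _ (by norm_num : (3:ℕ) % 2 = 1), ← sq, sgn_sq]
      · rw [gv13, gv8, one_pow]
      · rw [gv13, gv9]; exact (sgn_pow_even _ (by norm_num)).symm
      · rw [gv13, gv0]; exact (sgn_pow_even _ (by norm_num)).symm
      · rw [gv13, gv1]; exact (sgn_pow_even _ (by norm_num)).symm
      · rw [gv13, gv2]; exact (sgn_pow_even _ (by norm_num)).symm
      · rw [gv13, gv3]; exact (sgn_pow_even _ (by norm_num)).symm
      · rw [gv13, gv4]; exact (sgn_pow_even _ (by norm_num)).symm
      · rw [gv13, gv5]; exact (sgn_pow_even _ (by norm_num)).symm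
      · rw [gv13, gv6]; exact (sgn_pow_even _ (by norm_num)).symm
      · rw [gv13, gv7]; exact (sgn_pow_even _ (by norm_num)).symm
    · rintro ⟨h1, h2, h3, h4, h5, h6, h7, h8, h9, h10, h11, h12, h13, h14⟩
      have ha0 : ((p 8 : ℚ)) ≠ 0 := Units.ne_zero _
      have hA : ((p 8 : ℚ)) ^ 12 = ((p 8 : ℚ)) ^ 7 * ((p 9 : ℚ)) ^ 6 := by
        have h := congrArg (Units.val) (h5.symm.trans (h4.trans (by rw [h1, h2])))
        push_cast at h
        linear_combination h
      have hB : ((p 8 : ℚ)) ^ 12 = ((p 9 : ℚ)) ^ 10 := by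
        have h := congrArg (Units.val) (h5.symm.trans h6)
        push_cast at h
        exact h
      have e1 : ((p 8 : ℚ)) ^ 5 = ((p 9 : ℚ)) ^ 6 := by
        have h0 : ((p 8 : ℚ)) ^ 7 * (((p 8 : ℚ)) ^ 5 - ((p 9 : ℚ)) ^ 6) = 0 := by
          linear_combination hA
        rcases mul_eq_zero.mp h0 with h | h
        · exact absurd h (pow_ne_zero _ ha0)
        · linarith
      have e2 : ((p 8 : ℚ)) ^ 11 = 1 := by
        have h0 : ((p 8 : ℚ)) ^ 25 * (((p 8 : ℚ)) ^ 11 - 1) = 0 := by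
          linear_combination ((p 8 : ℚ) ^ 24 + (p 8 : ℚ) ^ 12 * (p 9 : ℚ) ^ 10 +
              (p 9 : ℚ) ^ 20) * hB -
            ((p 8 : ℚ) ^ 20 + (p 8 : ℚ) ^ 15 * (p 9 : ℚ) ^ 6 + (p 8 : ℚ) ^ 10 * (p 9 : ℚ) ^ 12 +
              (p 8 : ℚ) ^ 5 * (p 9 : ℚ) ^ 18 + (p 9 : ℚ) ^ 24) * e1
        rcases mul_eq_zero.mp h0 with h | h
        · exact absurd h (pow_ne_zero _ ha0)
        · linarith
      have hp8pow : p 8 ^ 11 = 1 := by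
        apply Units.ext
        rw [Units.val_pow_eq_pow_val, Units.val_one]
        exact e2
      have hp8 : p 8 = 1 := by
        rcases units_root (n := 11) (by norm_num) hp8pow with h | h
        · exact h
        · exfalso
          rw [h] at e2
          norm_num at e2
      have hp13 : p 13 = 1 := by rw [h5, hp8, one_pow]
      have hp9 : p 9 = 1 ∨ p 9 = -1 :=
        units_root (n := 10) (by norm_num) (by rw [← h6, hp13])
      have hp9sq : p 9 ^ 2 = 1 := by
        rcases hp9 with h | h
        · rw [h, one_pow]
        · rw [h, neg_one_sq]
      have hp0 : p 0 = 1 ∨ p 0 = -1 :=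
        units_root (n := 60) (by norm_num) (by rw [← h7, hp13])
      have hq1 : p 1 = 1 ∨ p 1 = -1 :=
        units_root (n := 40) (by norm_num) (by rw [← h8, hp13])
      have hq2 : p 2 = 1 ∨ p 2 = -1 :=
        units_root (n := 30) (by norm_num) (by rw [← h9, hp13])
      have hq3 : p 3 = 1 ∨ p 3 = -1 :=
        units_root (n := 20) (by norm_num) (by rw [← h10, hp13])
      have hq4 : p 4 = 1 ∨ p 4 = -1 :=
        units_root (n := 20) (by norm_num) (by rw [← h11, hp13])
      have hq5 : p 5 = 1 ∨ p 5 = -1 :=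
        units_root (n := 8) (by norm_num) (by rw [← h12, hp13])
      have hq6 : p 6 = 1 ∨ p 6 = -1 :=
        units_root (n := 6) (by norm_num) (by rw [← h13, hp13])
      have hq7 : p 7 = 1 ∨ p 7 = -1 :=
        units_root (n := 4) (by norm_num) (by rw [← h14, hp13])
      have e10 : p 10 = p 9 := by rw [h1, hp8, one_pow, one_mul]
      have e11 : p 11 = 1 := by rw [h2, hp8, one_pow, one_mul, hp9sq]
      have e12 : p 12 = p 9 := by
        apply Units.ext
        have h3' := congrArg (Units.val) h3
        have hp8' := congrArg (Units.val) hp8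
        have hp9sq' := congrArg (Units.val) hp9sq
        push_cast at h3' hp8' hp9sq' ⊢
        rw [h3', hp8']
        linear_combination ((p 9 : ℚ)) * hp9sq'
      set v : Fin 9 → ZMod 2 := fun j =>
        if (j : ℕ) = 8 then eps (p 9) else eps (p ⟨(j : ℕ), by omega⟩) with hv
      have hv8 : v 8 = eps (p 9) := rfl
      have hvlt : ∀ (k : ℕ) (hk : k < 8), v ⟨k, by omega⟩ = eps (p ⟨k, by omega⟩) := by
        intro k hk
        simp only [hv]
        rw [if_neg (Nat.ne_of_lt hk)]
      refine ⟨Multiplicative.ofAdd v, ?_⟩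
      rw [phi_apply, show Multiplicative.toAdd (Multiplicative.ofAdd v) = v from rfl]
      refine gvec_eq_of p v ?_ ?_ ?_ ?_ ?_ ?_ ?_ ?_ ?_ hp8 e10 e11 e12 hp13
      · rw [show v 0 = eps (p 0) from hvlt 0 (by norm_num)]; exact sgn_eps hp0
      · rw [show v 1 = eps (p 1) from hvlt 1 (by norm_num)]; exact sgn_eps hq1
      · rw [show v 2 = eps (p 2) from hvlt 2 (by norm_num)]; exact sgn_eps hq2
      · rw [show v 3 = eps (p 3) from hvlt 3 (by norm_num)]; exact sgn_eps hq3
      · rw [show v 4 = eps (p 4) from hvlt 4 (by norm_num)]; exact sgn_eps hq4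
      · rw [show v 5 = eps (p 5) from hvlt 5 (by norm_num)]; exact sgn_eps hq5
      · rw [show v 6 = eps (p 6) from hvlt 6 (by norm_num)]; exact sgn_eps hq6
      · rw [show v 7 = eps (p 7) from hvlt 7 (by norm_num)]; exact sgn_eps hq7
      · rw [hv8]; exact sgn_eps hp9
  · have h := Nat.card_congr (MonoidHom.ofInjective phi_inj).toEquiv
    rw [← h, Nat.card_eq_fintype_card, Fintype.card_multiplicative, Fintype.card_fun,
      ZMod.card, Fintype.card_fin]
    norm_num
  · rintro x hx
    obtain ⟨f, rfl⟩ := MonoidHom.mem_range.mp hx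
    rw [← map_mul, mult_sq, map_one]
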